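/- Let (X,τ_X,∂_X) be a Polish topometric space, (Y,τ_Y) a Polish space, and f : Y → X a continuous map with τ_X-dense image such that (fU)_ε is τ_X-open for every open U ⊆ Y and ε > 0, and (V)_ε is open for every open V ⊆ X and ε > 0. Then for every comeagre A ⊆ Y, the ∂_X-closure of f(A) is comeagre in X. -/

import Mathlib

open Set Metric Filter Topology TopologicalSpace

/-- Enlargement of the image of `V` under `f` by radius `r` w.r.t. `D`. -/
def en16 {X Y : Type*} (D : X → X → ℝ) (f : Y → X) (r : ℝ) (V : Set Y) : Set X :=
  {x | ∃ y ∈ V, D x (f y) < r}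

/-- Invariant maintained along the tree of open set pairs. -/
def inv16 {X Y : Type*} [TopologicalSpace X] [TopologicalSpace Y]
    (D : X → X → ℝ) (f : Y → X) (r : ℝ) (W : Set X) (V : Set Y) : Prop :=
  IsOpen W ∧ W.Nonempty ∧ IsOpen V ∧
    ((W = Set.univ ∧ V = Set.univ) ∨ W ⊆ en16 D f r V)

theorem aux16 {X Y : Type*} [TopologicalSpace X] [SecondCountableTopology X]
    [Nonempty X] [MetricSpace Y] [CompleteSpace Y]
    (D : X → X → ℝ)
    (hD_self : ∀ x : X, D x x = 0)
    (hD_symm : ∀ x y : X, D x y = D y x)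
    (hD_nonneg : ∀ x y : X, 0 ≤ D x y)
    (hD_lsc : ∀ r : ℝ, IsClosed {p : X × X | D p.1 p.2 ≤ r})
    (f : Y → X) (hf : Continuous f) (hdense : DenseRange f)
    (himg : ∀ U : Set Y, IsOpen U → ∀ ε > (0 : ℝ),
      IsOpen {x : X | ∃ y ∈ U, D x (f y) < ε})
    (henl : ∀ V : Set X, IsOpen V → ∀ ε > (0 : ℝ),
      IsOpen {x : X | ∃ v ∈ V, D x v < ε})
    (U : ℕ → Set Y) (hUo : ∀ n, IsOpen (U n)) (hUd : ∀ n, Dense (U n))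
    (r : ℝ) (hr : 0 < r) :
    {x : X | ∃ y : Y, (∀ n, y ∈ U n) ∧ D x (f y) ≤ r} ∈ residual X := by
  -- a countable family of basic open sets
  obtain ⟨b, hbc, hbne, hb⟩ := exists_countable_basis X
  obtain ⟨B, hB⟩ := (hbc.insert ∅).exists_eq_range (insert_nonempty _ _)
  have hBopen : ∀ i, IsOpen (B i) := by
    intro i
    have h : B i ∈ insert ∅ b := hB ▸ mem_range_self i
    rcases mem_insert_iff.mp h with h | h
    · rw [h]; exact isOpen_empty
    · exact hb.isOpen h
  have hBbasis : ∀ (x : X) (O : Set X), IsOpen O → x ∈ O → ∃ i, x ∈ B i ∧ B i ⊆ O := by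
    intro x O hO hxO
    obtain ⟨t, htb, hxt, htO⟩ := hb.exists_subset_of_mem_open hxO hO
    have h : t ∈ insert ∅ b := mem_insert_of_mem _ htb
    rw [hB] at h
    obtain ⟨i, rfl⟩ := h
    exact ⟨i, hxt, htO⟩
  -- witness lemma: a point of O ∩ W that is r-close to f of a point of V ∩ u
  have wit : ∀ (W : Set X) (V : Set Y), IsOpen W → IsOpen V →
      ((W = Set.univ ∧ V = Set.univ) ∨ W ⊆ en16 D f r V) →
      ∀ (O : Set X), IsOpen O → (O ∩ W).Nonempty →
      ∀ (u : Set Y), IsOpen u → Dense u →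
      ∃ x₀ ∈ O ∩ W, ∃ y₀ ∈ V ∩ u, D x₀ (f y₀) < r := by
    intro W V hW hV hWV O hO hne u hu hud
    rcases hWV with ⟨rfl, rfl⟩ | hWE
    · obtain ⟨x, hxO, -⟩ := hne
      obtain ⟨z, hzO, hzim⟩ :=
        (hdense.dense_image hf hud).inter_open_nonempty O hO ⟨x, hxO⟩
      obtain ⟨y₀, hy₀u, rfl⟩ := hzim
      exact ⟨f y₀, ⟨hzO, mem_univ _⟩, y₀, ⟨mem_univ _, hy₀u⟩,
        by rw [hD_self]; exact hr⟩
    · obtain ⟨x, hxO, hxW⟩ := hne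
      obtain ⟨y, hyV, hxy⟩ := hWE hxW
      set s := (D x (f y) + r) / 2 with hs
      have hts : D x (f y) < s := by rw [hs]; linarith
      have hsr : s < r := by rw [hs]; linarith
      have hs0 : 0 < s := lt_of_le_of_lt (hD_nonneg _ _) hts
      have hNopen : IsOpen {w : X | ∃ o ∈ O ∩ W, D w o < s} :=
        henl _ (hO.inter hW) s hs0
      have hfyN : f y ∈ {w : X | ∃ o ∈ O ∩ W, D w o < s} :=
        ⟨x, ⟨hxO, hxW⟩, by rw [hD_symm]; exact hts⟩
      have hycl : y ∈ closure (V ∩ u) := by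
        rw [_root_.mem_closure_iff]
        intro O' hO' hyO'
        obtain ⟨z, hz1, hz2⟩ := hud.inter_open_nonempty (O' ∩ V) (hO'.inter hV)
          ⟨y, hyO', hyV⟩
        exact ⟨z, hz1.1, hz1.2, hz2⟩
      have hfycl : f y ∈ closure (f '' (V ∩ u)) :=
        image_closure_subset_closure_image hf ⟨y, hycl, rfl⟩
      obtain ⟨w, hwN, hwim⟩ := _root_.mem_closure_iff.mp hfycl _ hNopen hfyN
      obtain ⟨y₀, hy₀, rfl⟩ := hwim
      obtain ⟨o, hoOW, hos⟩ := hwN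
      exact ⟨o, hoOW, y₀, hy₀, by rw [hD_symm]; exact lt_trans hos hsr⟩
  -- key step, in a form amenable to `choose`
  have keyT : ∀ (W : Set X) (V : Set Y) (O : Set X) (n : ℕ),
      ∃ (W' : Set X) (V' : Set Y),
        inv16 D f r W V → IsOpen O →
          inv16 D f r W' V' ∧ W' ⊆ W ∧ V' ⊆ V ∧
          ((O ∩ W).Nonempty → W' ⊆ O ∧ closure V' ⊆ V ∩ U n ∧
            (∃ z, V' ⊆ ball z ((1/2 : ℝ) ^ n)) ∧ W' ⊆ en16 D f r V') := by
    intro W V O n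
    by_cases hinv : inv16 D f r W V
    swap
    · exact ⟨W, V, fun h => absurd h hinv⟩
    by_cases hO : IsOpen O
    swap
    · exact ⟨W, V, fun _ h => absurd h hO⟩
    by_cases hne : (O ∩ W).Nonempty
    swap
    · exact ⟨W, V, fun _ _ => ⟨hinv, subset_rfl, subset_rfl, fun h => absurd h hne⟩⟩
    obtain ⟨hWo, hWne, hVo, hWV⟩ := hinv
    obtain ⟨x₀, hx₀, y₀, hy₀, hxy₀⟩ := wit W V hWo hVo hWV O hO hne (U n) (hUo n) (hUd n)
    have hVu : IsOpen (V ∩ U n) := hVo.inter (hUo n)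
    obtain ⟨ρ, hρ0, hρ⟩ := Metric.isOpen_iff.mp hVu y₀ hy₀
    set ρ₁ := min (ρ / 2) ((1/2 : ℝ) ^ n) with hρ₁
    have hρ₁0 : 0 < ρ₁ := lt_min (by linarith) (by positivity)
    have hV'cl : closure (ball y₀ ρ₁) ⊆ V ∩ U n := by
      refine closure_ball_subset_closedBall.trans ((closedBall_subset_ball ?_).trans hρ)
      have h1 : ρ₁ ≤ ρ / 2 := min_le_left _ _
      linarith
    set W' := (O ∩ W) ∩ {x | ∃ y ∈ ball y₀ ρ₁, D x (f y) < r} with hW'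
    have hW'o : IsOpen W' := (hO.inter hWo).inter (himg _ isOpen_ball r hr)
    have hx₀W' : x₀ ∈ W' := ⟨hx₀, y₀, mem_ball_self hρ₁0, hxy₀⟩
    refine ⟨W', ball y₀ ρ₁, fun _ _ =>
      ⟨⟨hW'o, ⟨x₀, hx₀W'⟩, isOpen_ball, Or.inr fun x hx => hx.2⟩,
        fun x hx => hx.1.2,
        (subset_closure.trans hV'cl).trans inter_subset_left,
        fun _ => ⟨fun x hx => hx.1.1, hV'cl,
          ⟨y₀, ball_subset_ball (min_le_right _ _)⟩,
          fun x hx => hx.2⟩⟩⟩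
  choose Wc Vc hc using keyT
  -- the tree of pairs of open sets, indexed by lists of basic-set indices
  obtain ⟨node, node_nil, node_cons⟩ :
      ∃ node : List ℕ → Set X × Set Y,
        node [] = (Set.univ, Set.univ) ∧
        ∀ (i : ℕ) (s : List ℕ), node (i :: s) =
          (Wc (node s).1 (node s).2 (B i) s.length,
            Vc (node s).1 (node s).2 (B i) s.length) :=
    ⟨fun s => List.rec ((Set.univ : Set X), (Set.univ : Set Y))
      (fun i s ih => (Wc ih.1 ih.2 (B i) s.length, Vc ih.1 ih.2 (B i) s.length)) s,
      rfl, fun i s => rfl⟩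
  have hInv : ∀ s : List ℕ, inv16 D f r (node s).1 (node s).2 := by
    intro s
    induction s with
    | nil =>
      rw [node_nil]
      exact ⟨isOpen_univ, univ_nonempty, isOpen_univ, Or.inl ⟨rfl, rfl⟩⟩
    | cons i s ih =>
      rw [node_cons]
      exact (hc (node s).1 (node s).2 (B i) s.length ih (hBopen i)).1
  have hchild : ∀ (i : ℕ) (s : List ℕ),
      (node (i :: s)).1 ⊆ (node s).1 ∧ (node (i :: s)).2 ⊆ (node s).2 ∧
      ((B i ∩ (node s).1).Nonempty →
        (node (i :: s)).1 ⊆ B i ∧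
        closure (node (i :: s)).2 ⊆ (node s).2 ∩ U s.length ∧
        (∃ z, (node (i :: s)).2 ⊆ ball z ((1/2 : ℝ) ^ s.length)) ∧
        (node (i :: s)).1 ⊆ en16 D f r (node (i :: s)).2) := by
    intro i s
    have h := hc (node s).1 (node s).2 (B i) s.length (hInv s) (hBopen i)
    rw [node_cons]
    exact ⟨h.2.1, h.2.2.1, h.2.2.2⟩
  -- each node's children cover it densely
  have hCovDense : ∀ s : List ℕ, (node s).1 ⊆
      closure (⋃ i, ⋃ (_ : (B i ∩ (node s).1).Nonempty), (node (i :: s)).1) := by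
    intro s x hx
    rw [_root_.mem_closure_iff]
    intro O hO hxO
    obtain ⟨i, hxi, hiO⟩ := hBbasis x O hO hxO
    have hne : (B i ∩ (node s).1).Nonempty := ⟨x, hxi, hx⟩
    obtain ⟨w, hw⟩ := (hInv (i :: s)).2.1
    have hsub := ((hchild i s).2.2 hne).1
    exact ⟨w, hiO (hsub hw), mem_iUnion.mpr ⟨i, mem_iUnion.mpr ⟨hne, hw⟩⟩⟩
  -- the residual set avoiding all "escape" sets
  have hres : (⋃ s : List ℕ, ((node s).1 \
      ⋃ i, ⋃ (_ : (B i ∩ (node s).1).Nonempty), (node (i :: s)).1))ᶜ ∈ residual X := by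
    rw [compl_iUnion]
    refine countable_iInter_mem.mpr fun s => ?_
    set C := ⋃ i, ⋃ (_ : (B i ∩ (node s).1).Nonempty), (node (i :: s)).1 with hC
    have hCo : IsOpen C :=
      isOpen_iUnion fun i => isOpen_iUnion fun _ => (hInv (i :: s)).1
    have hdo : Dense (C ∪ (closure C)ᶜ) := by
      intro z
      by_cases h : z ∈ closure C
      · exact closure_mono subset_union_left h
      · exact subset_closure (Or.inr h)
    refine Filter.mem_of_superset
      (residual_of_dense_open (hCo.union isClosed_closure.isOpen_compl) hdo) ?_
    rintro z (hz | hz)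
    · exact fun h => h.2 hz
    · exact fun h => hz (hCovDense s h.1)
  refine Filter.mem_of_superset hres ?_
  intro x hx
  -- along a branch through x, extract witnesses
  have hstep : ∀ s : List ℕ, x ∈ (node s).1 →
      ∃ i, (B i ∩ (node s).1).Nonempty ∧ x ∈ (node (i :: s)).1 := by
    intro s hxs
    have h1 : x ∉ (node s).1 \
        ⋃ i, ⋃ (_ : (B i ∩ (node s).1).Nonempty), (node (i :: s)).1 :=
      fun h => hx (mem_iUnion.mpr ⟨s, h⟩)
    have h2 : x ∈ ⋃ i, ⋃ (_ : (B i ∩ (node s).1).Nonempty), (node (i :: s)).1 := by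
      by_contra h
      exact h1 ⟨hxs, h⟩
    simpa [mem_iUnion, exists_prop] using h2
  choose pick hpick1 hpick2 using hstep
  have hxnil : x ∈ (node []).1 := by rw [node_nil]; exact mem_univ x
  obtain ⟨c, c0, cstep⟩ : ∃ c : ℕ → {s : List ℕ // x ∈ (node s).1},
      c 0 = ⟨[], hxnil⟩ ∧ ∀ n, c (n + 1) =
        ⟨pick (c n).1 (c n).2 :: (c n).1, hpick2 (c n).1 (c n).2⟩ :=
    ⟨fun n => Nat.rec ⟨[], hxnil⟩
      (fun _ ih => ⟨pick ih.1 ih.2 :: ih.1, hpick2 ih.1 ih.2⟩) n,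
      rfl, fun n => rfl⟩
  have clen : ∀ n, (c n).1.length = n := by
    intro n
    induction n with
    | zero => rw [c0]; rfl
    | succ n ih => rw [cstep n]; simpa using ih
  have ccons : ∀ n, closure (node (c (n + 1)).1).2 ⊆ (node (c n).1).2 ∩ U n ∧
      (∃ z, (node (c (n + 1)).1).2 ⊆ ball z ((1/2 : ℝ) ^ n)) ∧
      (node (c (n + 1)).1).1 ⊆ en16 D f r (node (c (n + 1)).1).2 := by
    intro n
    have hcond := hpick1 (c n).1 (c n).2
    have h := (hchild (pick (c n).1 (c n).2) (c n).1).2.2 hcond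
    rw [clen n] at h
    rw [cstep n]
    exact ⟨h.2.1, h.2.2.1, h.2.2.2⟩
  have hyex : ∀ n, ∃ y ∈ (node (c (n + 1)).1).2, D x (f y) < r :=
    fun n => (ccons n).2.2 (c (n + 1)).2
  choose y hy1 hy2 using hyex
  have hVmono : ∀ n m, n ≤ m → (node (c (m + 1)).1).2 ⊆ (node (c (n + 1)).1).2 := by
    intro n m hnm
    induction m with
    | zero =>
      obtain rfl : n = 0 := Nat.le_zero.mp hnm
      exact subset_rfl
    | succ m ih =>
      rcases Nat.lt_or_ge n (m + 1) with h | h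
      · exact (subset_closure.trans (ccons (m + 1)).1).trans
          (inter_subset_left.trans (ih (Nat.lt_succ_iff.mp h)))
      · obtain rfl : n = m + 1 := le_antisymm hnm h
        exact subset_rfl
  have hcau : CauchySeq y := by
    refine cauchySeq_of_le_geometric (1/2 : ℝ) 2 (by norm_num) fun n => ?_
    obtain ⟨z, hz⟩ := (ccons n).2.1
    have h1 : dist (y n) z < (1/2 : ℝ) ^ n := mem_ball.mp (hz (hy1 n))
    have h2 : dist (y (n + 1)) z < (1/2 : ℝ) ^ n :=
      mem_ball.mp (hz (hVmono n (n + 1) (Nat.le_succ n) (hy1 (n + 1))))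
    have h3 := dist_triangle (y n) z (y (n + 1))
    have h4 : dist z (y (n + 1)) = dist (y (n + 1)) z := dist_comm _ _
    nlinarith [pow_pos (by norm_num : (0:ℝ) < 1/2) n]
  obtain ⟨ylim, hylim⟩ := cauchySeq_tendsto_of_complete hcau
  have hylimcl : ∀ n, ylim ∈ closure (node (c (n + 1)).1).2 := by
    intro n
    apply mem_closure_of_tendsto hylim
    filter_upwards [Filter.eventually_ge_atTop n] with m hm
    exact hVmono n m hm (hy1 m)
  have hylimU : ∀ n, ylim ∈ U n := fun n => ((ccons n).1 (hylimcl n)).2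
  have hDlim : D x (f ylim) ≤ r := by
    have htend : Tendsto (fun m => ((x, f (y m)) : X × X)) atTop (nhds (x, f ylim)) :=
      tendsto_const_nhds.prodMk_nhds ((hf.tendsto ylim).comp hylim)
    exact (hD_lsc r).mem_of_tendsto htend
      (Filter.Eventually.of_forall fun m => le_of_lt (hy2 m))
  exact ⟨ylim, hylimU, hDlim⟩

/-- Abstract approximation criterion. Let `(X,τ_X,D)` be a Polish
topometric space, `Y` a Polish space and `f : Y → X` continuous with dense image such
that `(fU)_ε` is open for every open `U ⊆ Y` and `ε > 0`, and `(V)_ε` is open for every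
open `V ⊆ X` and `ε > 0`. Then the `D`-closure of the image of any comeagre subset of
`Y` is comeagre in `X`. -/
theorem stmt_16 {X Y : Type*} [TopologicalSpace X] [PolishSpace X]
    [TopologicalSpace Y] [PolishSpace Y]
    (D : X → X → ℝ)
    (hD_eq : ∀ x y : X, D x y = 0 ↔ x = y)
    (hD_symm : ∀ x y : X, D x y = D y x)
    (hD_tri : ∀ x y z : X, D x z ≤ D x y + D y z)
    (hD_ref : ∀ U : Set X, IsOpen U → ∀ x ∈ U, ∃ ε > (0 : ℝ), {y | D x y < ε} ⊆ U)
    (hD_lsc : ∀ r : ℝ, IsClosed {p : X × X | D p.1 p.2 ≤ r})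
    (f : Y → X) (hf : Continuous f) (hdense : DenseRange f)
    (himg : ∀ U : Set Y, IsOpen U → ∀ ε > (0 : ℝ),
      IsOpen {x : X | ∃ y ∈ U, D x (f y) < ε})
    (henl : ∀ V : Set X, IsOpen V → ∀ ε > (0 : ℝ),
      IsOpen {x : X | ∃ v ∈ V, D x v < ε})
    (A : Set Y) (hA : A ∈ residual Y) :
    {x : X | ∀ ε > (0 : ℝ), ∃ y ∈ A, D x (f y) < ε} ∈ residual X := by
  rcases isEmpty_or_nonempty X with hX | hX
  · have h : {x : X | ∀ ε > (0 : ℝ), ∃ y ∈ A, D x (f y) < ε} = Set.univ :=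
      Set.eq_univ_of_forall fun x => (hX.false x).elim
    rw [h]; exact Filter.univ_mem
  letI := upgradeIsCompletelyMetrizable Y
  obtain ⟨S, hSo, hSd, hSc, hSsub⟩ := mem_residual_iff.mp hA
  obtain ⟨U, hU⟩ := (hSc.insert Set.univ).exists_eq_range (Set.insert_nonempty _ _)
  have hUmem : ∀ n, U n ∈ insert Set.univ S := fun n => hU ▸ Set.mem_range_self n
  have hUo : ∀ n, IsOpen (U n) := by
    intro n
    rcases Set.mem_insert_iff.mp (hUmem n) with h | h
    · rw [h]; exact isOpen_univ
    · exact hSo _ h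
  have hUd : ∀ n, Dense (U n) := by
    intro n
    rcases Set.mem_insert_iff.mp (hUmem n) with h | h
    · rw [h]; exact dense_univ
    · exact hSd _ h
  have hUsub : (⋂ n, U n) ⊆ A := by
    refine Set.Subset.trans ?_ hSsub
    intro z hz t ht
    have h : t ∈ insert Set.univ S := Set.mem_insert_of_mem _ ht
    rw [hU] at h
    obtain ⟨n, rfl⟩ := h
    exact Set.mem_iInter.mp hz n
  have hD_self : ∀ x : X, D x x = 0 := fun x => (hD_eq x x).mpr rfl
  have hD_nonneg : ∀ x y : X, 0 ≤ D x y := by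
    intro x y
    have h := hD_tri x y x
    rw [hD_self, hD_symm y x] at h
    linarith
  have key : ∀ m : ℕ,
      {x : X | ∃ y : Y, (∀ n, y ∈ U n) ∧ D x (f y) ≤ 1 / ((m : ℝ) + 1)} ∈ residual X := by
    intro m
    exact aux16 D hD_self hD_symm hD_nonneg hD_lsc f hf hdense himg henl U hUo hUd
      (1 / ((m : ℝ) + 1)) (by positivity)
  refine Filter.mem_of_superset (countable_iInter_mem.mpr key) ?_
  intro x hx ε hε
  obtain ⟨m, hm⟩ := exists_nat_one_div_lt hε
  obtain ⟨yy, hyU, hyD⟩ := Set.mem_iInter.mp hx m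
  exact ⟨yy, hUsub (Set.mem_iInter.mpr hyU), lt_of_le_of_lt hyD hm⟩
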